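/- Let m = 2 with capacities k_1 ≥ k_2, k_1 + k_2 < n. If a percentile vector v = (v_1, v_2) with v_1 < v_2 satisfies ⌊v_2(n−1)⌋ − ⌊v_1(n−1)⌋ ≥ k_1 + k_2 − 1, then for every input x ∈ [0,1]^n with facility locations y_1 = x_{i_1} ≤ y_2 = x_{i_2} output by PM_v (i_j = ⌊v_j(n−1)⌋+1) and y_1 < y_2, letting r_j be the minimal radius such that the closed ball B_{r_j}(y_j) contains at least k_j agent positions, one has r_1 + r_2 ≤ |y_1 − y_2|, and in every pure Nash Equilibrium of the induced FCFS game: every agent with |x_i − y_j| < r_j for the facility j nearer to it receives utility 1 − |x_i − y_j|, every agent outside B_{r_1}(y_1) ∪ B_{r_2}(y_2) receives utility 0, and the total utility contributed by agents at distance exactly r_j from y_j is the same across all pure Nash Equilibria; hence all pure Nash Equilibria yield the same Social Welfare. -/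

import Mathlib

open scoped Classical

noncomputable section

/-- Agent `i'` precedes agent `i` at a facility located at `y`: it is strictly closer,
or equally close with higher priority (smaller index). -/
def Prec {n : ℕ} (x : Fin n → ℝ) (y : ℝ) (i' i : Fin n) : Prop :=
  |x i' - y| < |x i - y| ∨ (|x i' - y| = |x i - y| ∧ i' < i)

/-- Utility of agent `i` in the FCFS game: positions `x`, facility locations `y`,
capacities `k`, strategy profile `s`.  Agent `i` is served by facility `s i` iff fewer
than `k (s i)` agents selecting `s i` precede it. -/
def utility {n m : ℕ} (x : Fin n → ℝ) (y : Fin m → ℝ) (k : Fin m → ℕ)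
    (s : Fin n → Fin m) (i : Fin n) : ℝ :=
  if {i' | s i' = s i ∧ Prec x (y (s i)) i' i}.ncard < k (s i)
  then 1 - |x i - y (s i)| else 0

/-- Pure Nash equilibrium of the FCFS game. -/
def isNE {n m : ℕ} (x : Fin n → ℝ) (y : Fin m → ℝ) (k : Fin m → ℕ)
    (s : Fin n → Fin m) : Prop :=
  ∀ (i : Fin n) (j : Fin m),
    utility x y k (Function.update s i j) i ≤ utility x y k s i

/-- Social welfare of a strategy profile. -/
def SW {n m : ℕ} (x : Fin n → ℝ) (y : Fin m → ℝ) (k : Fin m → ℕ)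
    (s : Fin n → Fin m) : ℝ :=
  ∑ i, utility x y k s i

def InUnit {N : ℕ} (x : Fin N → ℝ) : Prop := ∀ i, x i ∈ Set.Icc (0 : ℝ) 1

/-- The `i`-th (0-based) smallest entry of `x` (junk value `0` out of range). -/
def sortedVal {n : ℕ} (x : Fin n → ℝ) (i : ℕ) : ℝ :=
  if h : i < n then x (Tuple.sort x ⟨i, h⟩) else 0

/-- The 1-based index `⌊(n-1)v⌋ + 1` used by the percentile mechanism. -/
def percIdx (n : ℕ) (v : ℝ) : ℕ := ⌊((n : ℝ) - 1) * v⌋.toNat + 1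

/-- The location selected by the percentile `v`: the `(⌊(n-1)v⌋+1)`-th sorted report. -/
def percLoc {n : ℕ} (x : Fin n → ℝ) (v : ℝ) : ℝ :=
  sortedVal x (⌊((n : ℝ) - 1) * v⌋.toNat)

/-- The percentile mechanism induced by the percentile vector `v`. -/
def PM {n m : ℕ} (v : Fin m → ℝ) : (Fin n → ℝ) → Fin m → ℝ :=
  fun x j => percLoc x (v j)

/-- A mechanism is Equilibrium Stable if on every instance all pure Nash equilibria of the
induced FCFS game yield the same Social Welfare. -/
def EquilibriumStable {n m : ℕ} (k : Fin m → ℕ)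
    (M : (Fin n → ℝ) → Fin m → ℝ) : Prop :=
  ∀ x, InUnit x → ∀ s s', isNE x (M x) k s → isNE x (M x) k s' →
    SW x (M x) k s = SW x (M x) k s'

/-- A mechanism is absolutely truthful if no agent can increase its best-response utility
by misreporting, whatever the fixed strategies of the others. -/
def AbsolutelyTruthful {n m : ℕ} (k : Fin m → ℕ)
    (M : (Fin n → ℝ) → Fin m → ℝ) : Prop :=
  ∀ x, InUnit x → ∀ (i : Fin n) (x' : ℝ), x' ∈ Set.Icc (0 : ℝ) 1 →
    ∀ s : Fin n → Fin m,
      (⨆ si : Fin m, utility x (M (Function.update x i x')) k (Function.update s i si) i) ≤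
      (⨆ si : Fin m, utility x (M x) k (Function.update s i si) i)

/-- Optimal Social Welfare over facility locations in `[0,1]^m` and Nash equilibria. -/
def SWopt {n m : ℕ} (k : Fin m → ℕ) (x : Fin n → ℝ) : ℝ :=
  sSup {w | ∃ y : Fin m → ℝ, InUnit y ∧ ∃ s, isNE x y k s ∧ w = SW x y k s}

/-- Social Welfare achieved by a mechanism (common value over all NE for ES mechanisms). -/
def SWmech {n m : ℕ} (k : Fin m → ℕ) (M : (Fin n → ℝ) → Fin m → ℝ)
    (x : Fin n → ℝ) : ℝ :=
  sSup {w | ∃ s, isNE x (M x) k s ∧ w = SW x (M x) k s}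

/-- Approximation ratio of a mechanism. -/
def approxRatio {n m : ℕ} (k : Fin m → ℕ) (M : (Fin n → ℝ) → Fin m → ℝ) : ℝ :=
  sSup {r | ∃ x : Fin n → ℝ, InUnit x ∧ r = SWopt k x / SWmech k M x}

end

namespace ESWG

variable {n : ℕ}

/-- Lexicographic tie-breaking key. -/
def key (x : Fin n → ℝ) (c : ℝ) (i : Fin n) : ℝ ×ₗ Fin n := toLex (|x i - c|, i)

lemma key_inj (x : Fin n → ℝ) (c : ℝ) : Function.Injective (key x c) := by
  intro a b h
  have := congrArg (fun p => (ofLex p).2) h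
  simpa [key] using this

lemma prec_iff_key (x : Fin n → ℝ) (c : ℝ) (i' i : Fin n) :
    Prec x c i' i ↔ key x c i' < key x c i := by
  rw [key, key, Prod.Lex.lt_iff]; rfl

lemma prec_irrefl (x : Fin n → ℝ) (c : ℝ) (i : Fin n) : ¬ Prec x c i i := by
  rw [prec_iff_key]; exact lt_irrefl _

lemma prec_trans {x : Fin n → ℝ} {c : ℝ} {a b d : Fin n}
    (h1 : Prec x c a b) (h2 : Prec x c b d) : Prec x c a d := by
  rw [prec_iff_key] at *; exact lt_trans h1 h2

lemma prec_dist_le {x : Fin n → ℝ} {c : ℝ} {i' i : Fin n} (h : Prec x c i' i) :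
    |x i' - c| ≤ |x i - c| := by
  rcases h with h | ⟨h, _⟩
  · exact le_of_lt h
  · exact le_of_eq h

lemma prec_of_dist_lt {x : Fin n → ℝ} {c : ℝ} {i' i : Fin n}
    (h : |x i' - c| < |x i - c|) : Prec x c i' i := Or.inl h

/-- Fin 2 helpers -/
lemma fin2_resolve : ∀ j j' z : Fin 2, j ≠ j' → z ≠ j' → z = j := by decide

lemma fin2_ne' : ∀ j j' : Fin 2, j ≠ j' → j' ≠ j := by decide

lemma fin2_sum {M : Type*} [AddCommMonoid M] (F : Fin 2 → M) :
    ∀ j j' : Fin 2, j ≠ j' → F j + F j' = F 0 + F 1 := by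
  have : ∀ j j' : Fin 2, j ≠ j' → (j = 0 ∧ j' = 1) ∨ (j = 1 ∧ j' = 0) := by decide
  intro j j' h
  rcases this j j' h with ⟨h1, h2⟩ | ⟨h1, h2⟩ <;> subst h1 <;> subst h2
  · rfl
  · exact add_comm _ _

/-- counting helper : a Finset of naturals mapped injectively into a set -/
lemma card_le_ncard_of_inj {T : Finset ℕ} {f : ℕ → Fin n} {S : Set (Fin n)}
    (h1 : ∀ t ∈ T, f t ∈ S) (h2 : Set.InjOn f T) : T.card ≤ S.ncard := by
  have h3 : (f '' T).ncard = T.card := by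
    rw [Set.ncard_image_of_injOn h2, Set.ncard_coe_finset]
  rw [← h3]
  exact Set.ncard_le_ncard (by rintro _ ⟨t, ht, rfl⟩; exact h1 t ht) (Set.toFinite _)

/-- counting : `m < #{i | f i ≤ ρ}` iff the `m`-th smallest value of `f` is `≤ ρ`. -/
lemma lt_ncard_iff_sorted_le (f : Fin n → ℝ) (ρ : ℝ) (m : Fin n) :
    (m : ℕ) < {i | f i ≤ ρ}.ncard ↔ f (Tuple.sort f m) ≤ ρ := by
  have hcard : {i | f i ≤ ρ}.ncard = Fintype.card {i // (f ∘ Tuple.sort f) i ≤ ρ} := by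
    rw [Set.ncard_eq_toFinset_card']
    rw [Set.toFinset_setOf, ← Fintype.card_subtype]
    exact Fintype.card_congr ((Tuple.sort f).subtypeEquiv (by intro a; simp)).symm
  rw [hcard]
  rw [Fintype.card_subtype]
  convert Tuple.lt_card_le_iff_apply_le_of_monotone (a := ρ) (j := m) (Tuple.monotone_sort f) <;> rfl


/-- Bottom segment of a finite set in a linear order. -/
lemma exists_bottom {β : Type*} [LinearOrder β] (G : Finset β) :
    ∀ m : ℕ, m ≤ G.card →
      ∃ G' ⊆ G, G'.card = m ∧ ∀ a ∈ G', ∀ b ∈ G, b ∉ G' → a < b := by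
  intro m
  induction m with
  | zero => intro _; exact ⟨∅, by simp⟩
  | succ m ih =>
    intro hm
    obtain ⟨G', hsub, hcard, hbot⟩ := ih (Nat.le_of_succ_le hm)
    have hne : (G \ G').Nonempty := by
      rw [← Finset.card_pos, Finset.card_sdiff_of_subset hsub]
      omega
    set b₀ := (G \ G').min' hne with hb₀
    have hb₀mem : b₀ ∈ G \ G' := (G \ G').min'_mem hne
    have hb₀G : b₀ ∈ G := (Finset.mem_sdiff.1 hb₀mem).1
    have hb₀G' : b₀ ∉ G' := (Finset.mem_sdiff.1 hb₀mem).2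
    refine ⟨insert b₀ G', Finset.insert_subset hb₀G hsub, ?_, ?_⟩
    · rw [Finset.card_insert_of_notMem hb₀G', hcard]
    · intro a ha b hbG hb'
      have hbb₀ : b ≠ b₀ := fun h => hb' (h ▸ Finset.mem_insert_self _ _)
      have hbG' : b ∉ G' := fun h => hb' (Finset.mem_insert_of_mem h)
      rcases Finset.mem_insert.1 ha with rfl | haG'
      · exact lt_of_le_of_ne ((G \ G').min'_le b (Finset.mem_sdiff.2 ⟨hbG, hbG'⟩))
          (Ne.symm hbb₀)
      · exact hbot a haG' b hbG hbG'

section Core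

variable {x : Fin n → ℝ} {y : Fin 2 → ℝ} {K : Fin 2 → ℕ} {s : Fin n → Fin 2}

/-- The set of agents preceding `i` at facility `j` among those selecting `j`. -/
def Pset (x : Fin n → ℝ) (y : Fin 2 → ℝ) (s : Fin n → Fin 2) (j : Fin 2) (i : Fin n) :
    Set (Fin n) := {i' | s i' = j ∧ Prec x (y j) i' i}

lemma utility_eq (x : Fin n → ℝ) (y : Fin 2 → ℝ) (K : Fin 2 → ℕ) (s : Fin n → Fin 2)
    (i : Fin n) {j : Fin 2} (h : s i = j) :
    utility x y K s i
      = if (Pset x y s j i).ncard < K j then 1 - |x i - y j| else 0 := by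
  subst h; rfl

lemma update_utility_eq (x : Fin n → ℝ) (y : Fin 2 → ℝ) (K : Fin 2 → ℕ) (s : Fin n → Fin 2)
    (i : Fin n) (j : Fin 2) :
    utility x y K (Function.update s i j) i
      = if (Pset x y s j i).ncard < K j then 1 - |x i - y j| else 0 := by
  have h1 : Function.update s i j i = j := Function.update_self i j s
  have hset : Pset x y (Function.update s i j) j i = Pset x y s j i := by
    ext i'
    simp only [Pset, Set.mem_setOf_eq]
    by_cases hi' : i' = i
    · subst hi'
      simp [prec_irrefl, Function.update_self]
    · rw [Function.update_of_ne hi']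
  rw [utility_eq x y K _ i h1, hset]

lemma pset_mono {j : Fin 2} {w w' : Fin n}
    (hlt : key x (y j) w < key x (y j) w') :
    Pset x y s j w ⊆ Pset x y s j w' := by
  intro p hp
  obtain ⟨hp1, hp2⟩ := hp
  rw [prec_iff_key] at hp2
  refine ⟨hp1, ?_⟩
  rw [prec_iff_key]
  exact lt_trans hp2 hlt

lemma pset_ncard_lt {j : Fin 2} {w w' : Fin n} (hw : s w = j)
    (hlt : key x (y j) w < key x (y j) w') :
    (Pset x y s j w).ncard < (Pset x y s j w').ncard := by
  apply Set.ncard_lt_ncard _ (Set.toFinite _)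
  rw [Set.ssubset_iff_of_subset (pset_mono hlt)]
  refine ⟨w, ⟨hw, by rw [prec_iff_key]; exact hlt⟩, fun hmem => ?_⟩
  exact prec_irrefl x (y j) w hmem.2

/-- At most `K j` agents selecting `j` are served there. -/
lemma serv_ncard_le (x : Fin n → ℝ) (y : Fin 2 → ℝ) (K : Fin 2 → ℕ) (s : Fin n → Fin 2)
    (j : Fin 2) :
    {w | s w = j ∧ (Pset x y s j w).ncard < K j}.ncard ≤ K j := by
  have htgt : ({m : ℕ | m < K j}).ncard = K j := by
    have : {m : ℕ | m < K j} = ↑(Finset.range (K j)) := by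
      ext m; simp
    rw [this, Set.ncard_coe_finset, Finset.card_range]
  refine le_trans (Set.ncard_le_ncard_of_injOn (fun w => (Pset x y s j w).ncard)
    (fun w hw => hw.2) ?_ (Set.toFinite _)) (le_of_eq htgt)
  intro w hw w' hw' heq
  by_contra hne
  have hk : key x (y j) w ≠ key x (y j) w' := fun h => hne (key_inj x (y j) h)
  rcases lt_or_gt_of_ne hk with h | h
  · exact absurd heq (Nat.ne_of_lt (pset_ncard_lt hw.1 h))
  · exact absurd heq.symm (Nat.ne_of_lt (pset_ncard_lt hw'.1 h))

lemma habs_le (hx : InUnit x) (hy01 : ∀ j, y j ∈ Set.Icc (0:ℝ) 1) (i : Fin n) (j : Fin 2) :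
    |x i - y j| ≤ 1 := by
  obtain ⟨h1, h2⟩ := hx i
  obtain ⟨h3, h4⟩ := hy01 j
  rw [abs_le]; constructor <;> linarith

lemma htri (i : Fin n) {j j' : Fin 2} (hjj : j ≠ j') :
    y 1 - y 0 ≤ |x i - y j| + |x i - y j'| := by
  have h1 : |x i - y j| + |x i - y j'| = |x i - y 0| + |x i - y 1| :=
    fin2_sum (fun j => |x i - y j|) j j' hjj
  have h2 : |y 0 - y 1| ≤ |y 0 - x i| + |x i - y 1| := abs_sub_le _ _ _
  have h3 : |y 0 - x i| = |x i - y 0| := abs_sub_comm _ _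
  have h4 : y 1 - y 0 ≤ |y 0 - y 1| := by
    rw [abs_sub_comm]; exact le_abs_self _
  linarith

lemma ne_dev (hNE : isNE x y K s) (i : Fin n) (j : Fin 2)
    (h : (Pset x y s j i).ncard < K j) :
    1 - |x i - y j| ≤ utility x y K s i := by
  have := hNE i j
  rwa [update_utility_eq, if_pos h] at this

lemma util_nonneg (hx : InUnit x) (hy01 : ∀ j, y j ∈ Set.Icc (0:ℝ) 1) (i : Fin n) :
    0 ≤ utility x y K s i := by
  rw [utility_eq x y K s i rfl]
  split
  · linarith [habs_le hx hy01 i (s i)]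
  · exact le_refl 0

lemma util_pos (i : Fin n) (h : 0 < utility x y K s i) :
    (Pset x y s (s i) i).ncard < K (s i) ∧
      utility x y K s i = 1 - |x i - y (s i)| := by
  rw [utility_eq x y K s i rfl] at h ⊢
  split at h
  · exact ⟨by assumption, by rw [if_pos (by assumption)]⟩
  · exact absurd h (lt_irrefl 0)

lemma pset_lt_of_inside {r : Fin 2 → ℝ}
    (hrmin : ∀ j (ρ : ℝ), 0 ≤ ρ → ρ < r j → {i | |x i - y j| ≤ ρ}.ncard < K j)
    (i : Fin n) (j : Fin 2) (hin : |x i - y j| < r j) :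
    (Pset x y s j i).ncard < K j := by
  refine lt_of_le_of_lt (Set.ncard_le_ncard ?_ (Set.toFinite _))
    (hrmin j _ (abs_nonneg _) hin)
  exact fun p hp => prec_dist_le hp.2

lemma pset_subset_pset {a i : Fin n} {j : Fin 2} (h : |x a - y j| < |x i - y j|) :
    Pset x y s j a ⊆ Pset x y s j i :=
  fun p hp => ⟨hp.1, Or.inl (lt_of_le_of_lt (prec_dist_le hp.2) h)⟩

/-- Agents strictly inside a ball select the corresponding facility and are served. -/
lemma inside_served
    (hx : InUnit x) (hy01 : ∀ j, y j ∈ Set.Icc (0:ℝ) 1)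
    {r : Fin 2 → ℝ}
    (hr1 : ∀ j, r j ≤ 1)
    (hrW : ∀ j, K j ≤ {i | |x i - y j| ≤ r j}.ncard)
    (hrmin : ∀ j (ρ : ℝ), 0 ≤ ρ → ρ < r j → {i | |x i - y j| ≤ ρ}.ncard < K j)
    (hsum : r 0 + r 1 ≤ y 1 - y 0)
    (hNE : isNE x y K s) (i : Fin n) (j : Fin 2) (hin : |x i - y j| < r j) :
    s i = j ∧ (Pset x y s j i).ncard < K j ∧ utility x y K s i = 1 - |x i - y j| := by
  have hPi : (Pset x y s j i).ncard < K j := pset_lt_of_inside hrmin i j hin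
  have hdev : 1 - |x i - y j| ≤ utility x y K s i := ne_dev hNE i j hPi
  have hd1 : |x i - y j| < 1 := lt_of_lt_of_le hin (hr1 j)
  have hupos : 0 < utility x y K s i := lt_of_lt_of_le (by linarith) hdev
  obtain ⟨hserved, hueq⟩ := util_pos i hupos
  by_cases hsi : s i = j
  · exact ⟨hsi, hPi, by rw [hueq, hsi]⟩
  exfalso
  have hne' : j ≠ s i := fun h => hsi h.symm
  have hle : |x i - y (s i)| ≤ |x i - y j| := by
    rw [hueq] at hdev; linarith
  have htr := htri (x := x) (y := y) i (Ne.symm hne')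
  have hpair : r (s i) + r j = r 0 + r 1 := fin2_sum r (s i) j (Ne.symm hne')
  have hgt : r (s i) < |x i - y (s i)| := by linarith
  -- find an agent within ball (s i) selecting j
  have hxa : ∃ a, |x a - y (s i)| ≤ r (s i) ∧ s a ≠ s i := by
    by_contra hall
    push_neg at hall
    have hsub : {a | |x a - y (s i)| ≤ r (s i)} ⊆ Pset x y s (s i) i := by
      intro a ha
      exact ⟨hall a ha, Or.inl (lt_of_le_of_lt ha hgt)⟩
    exact absurd (lt_of_le_of_lt (le_trans (hrW (s i))
      (Set.ncard_le_ncard hsub (Set.toFinite _))) hserved) (lt_irrefl _)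
  obtain ⟨a, haW, hasi⟩ := hxa
  have hsaj : s a = j := fin2_resolve j (s i) (s a) hne' hasi
  have hPa : (Pset x y s (s i) a).ncard < K (s i) :=
    lt_of_le_of_lt (Set.ncard_le_ncard
      (pset_subset_pset (lt_of_le_of_lt haW hgt)) (Set.toFinite _)) hserved
  have hdeva : 1 - |x a - y (s i)| ≤ utility x y K s a := ne_dev hNE a (s i) hPa
  have hd1a : |x i - y (s i)| ≤ 1 := habs_le hx hy01 i (s i)
  have huapos : 0 < utility x y K s a := by
    have : r (s i) < 1 := by linarith
    exact lt_of_lt_of_le (by linarith) hdeva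
  obtain ⟨_, huaeq⟩ := util_pos a huapos
  rw [huaeq, hsaj] at hdeva
  -- d j a ≤ d (s i) a ≤ r (s i), and triangle forces d j a ≥ r j
  have htra := htri (x := x) (y := y) a hne'
  have hpair2 : r j + r (s i) = r 0 + r 1 := fin2_sum r j (s i) hne'
  linarith

lemma fin2_other : ∀ j : Fin 2, j ≠ 1 - j := by decide

/-- In a NE, an agent receiving positive utility is within the critical radius
of its chosen facility. -/
lemma pos_dist_le
    (hx : InUnit x) (hy01 : ∀ j, y j ∈ Set.Icc (0:ℝ) 1)
    {r : Fin 2 → ℝ}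
    (hr1 : ∀ j, r j ≤ 1)
    (hrW : ∀ j, K j ≤ {i | |x i - y j| ≤ r j}.ncard)
    (hrmin : ∀ j (ρ : ℝ), 0 ≤ ρ → ρ < r j → {i | |x i - y j| ≤ ρ}.ncard < K j)
    (hsum : r 0 + r 1 ≤ y 1 - y 0)
    (hcount : r 0 + r 1 = y 1 - y 0 → ∀ j j' : Fin 2, j ≠ j' →
      K 0 + K 1 ≤ ({a | |x a - y j| ≤ r j} ∪ {a | |x a - y j'| < r j'}).ncard)
    (hNE : isNE x y K s) (i : Fin n) (hpos : 0 < utility x y K s i) :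
    |x i - y (s i)| ≤ r (s i) := by
  by_contra hdc
  push_neg at hdc
  obtain ⟨hserved, hueq⟩ := util_pos i hpos
  set j := s i with hj
  set j' := 1 - j with hj'
  have hjj' : j ≠ j' := fin2_other j
  have hd1 : |x i - y j| < 1 := by rw [hueq] at hpos; linarith
  have hpair : r j + r j' = r 0 + r 1 := fin2_sum r j j' hjj'
  have hr1' : r j' ≤ 1 := hr1 j'
  have hrj1 : r j < 1 := lt_trans hdc hd1
  -- every agent of the ball of j that selects j precedes i
  have hWprec : ∀ w, |x w - y j| ≤ r j → s w = j → w ∈ Pset x y s j i :=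
    fun w hw hsw => ⟨hsw, Or.inl (lt_of_le_of_lt hw hdc)⟩
  -- existence of an agent in the ball of j selecting j'
  have hxa : ∃ a, |x a - y j| ≤ r j ∧ s a = j' := by
    by_contra hall
    push_neg at hall
    have hsub : {a | |x a - y j| ≤ r j} ⊆ Pset x y s j i := by
      intro a ha
      exact hWprec a ha (fin2_resolve j j' (s a) hjj' (hall a ha))
    exact absurd (lt_of_le_of_lt (le_trans (hrW j)
      (Set.ncard_le_ncard hsub (Set.toFinite _))) hserved) (lt_irrefl _)
  -- facts about any such agent
  have key_a : ∀ a, |x a - y j| ≤ r j → s a = j' →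
      (Pset x y s j' a).ncard < K j' ∧ |x a - y j'| ≤ |x a - y j| ∧
        r j' ≤ |x a - y j'| := by
    intro a haW hsa
    have hPa : (Pset x y s j a).ncard < K j :=
      lt_of_le_of_lt (Set.ncard_le_ncard
        (pset_subset_pset (lt_of_le_of_lt haW hdc)) (Set.toFinite _)) hserved
    have hdeva : 1 - |x a - y j| ≤ utility x y K s a := ne_dev hNE a j hPa
    have huapos : 0 < utility x y K s a := lt_of_lt_of_le (by linarith) hdeva
    obtain ⟨hPa', huaeq⟩ := util_pos a huapos
    rw [hsa] at hPa' huaeq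
    rw [huaeq] at hdeva
    have htra := htri (x := x) (y := y) a hjj'
    refine ⟨hPa', by linarith, by linarith⟩
  -- all such agents lie exactly on the boundary of the ball of j'
  have hbd : ∀ a, |x a - y j| ≤ r j → s a = j' → |x a - y j'| = r j' := by
    intro a haW hsa
    obtain ⟨hPa', hle', hge'⟩ := key_a a haW hsa
    by_contra hne2
    have hgt2 : r j' < |x a - y j'| := lt_of_le_of_ne hge' (Ne.symm hne2)
    have hxb : ∃ b, |x b - y j'| ≤ r j' ∧ s b = j := by
      by_contra hall
      push_neg at hall
      have hsub : {b | |x b - y j'| ≤ r j'} ⊆ Pset x y s j' a := by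
        intro b hb
        have hsb : s b = j' :=
          fin2_resolve j' j (s b) (Ne.symm hjj') (hall b hb)
        exact ⟨hsb, Or.inl (lt_of_le_of_lt hb hgt2)⟩
      exact absurd (lt_of_le_of_lt (le_trans (hrW j')
        (Set.ncard_le_ncard hsub (Set.toFinite _))) hPa') (lt_irrefl _)
    obtain ⟨b, hbW, hsb⟩ := hxb
    have hPb : (Pset x y s j' b).ncard < K j' :=
      lt_of_le_of_lt (Set.ncard_le_ncard
        (pset_subset_pset (lt_of_le_of_lt hbW hgt2)) (Set.toFinite _)) hPa'
    have hdevb : 1 - |x b - y j'| ≤ utility x y K s b := ne_dev hNE b j' hPb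
    have hrj'1 : r j' < 1 := by linarith
    have hubpos : 0 < utility x y K s b := lt_of_lt_of_le (by linarith) hdevb
    obtain ⟨_, hubeq⟩ := util_pos b hubpos
    rw [hsb] at hubeq
    rw [hubeq] at hdevb
    have htrb := htri (x := x) (y := y) b hjj'
    linarith
  -- the gap is exactly r 0 + r 1
  obtain ⟨a₀, ha₀W, ha₀s⟩ := hxa
  have hgap_eq : r 0 + r 1 = y 1 - y 0 := by
    obtain ⟨_, hle', _⟩ := key_a a₀ ha₀W ha₀s
    have hbd₀ := hbd a₀ ha₀W ha₀s
    have htra := htri (x := x) (y := y) a₀ hjj'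
    linarith
  -- counting
  set W : Set (Fin n) := {a | |x a - y j| ≤ r j} with hW
  set A : Set (Fin n) := {a | |x a - y j| ≤ r j ∧ s a = j'} with hA
  set I : Set (Fin n) := {a | |x a - y j'| < r j'} with hI
  have hAW : A ⊆ W := fun a ha => ha.1
  have hc1 : (W \ A).ncard + 1 ≤ K j := by
    have hsub : insert i (W \ A) ⊆ {w | s w = j ∧ (Pset x y s j w).ncard < K j} := by
      intro w hw
      rcases Set.mem_insert_iff.1 hw with rfl | ⟨hwW, hwA⟩
      · exact ⟨rfl, hserved⟩
      · have hsw : s w = j := by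
          by_contra hsw
          exact hwA ⟨hwW, fin2_resolve j' j (s w) (Ne.symm hjj') hsw⟩
        refine ⟨hsw, lt_of_le_of_lt (Set.ncard_le_ncard ?_ (Set.toFinite _)) hserved⟩
        intro p hp
        exact ⟨hp.1, Or.inl (lt_of_le_of_lt (le_trans (prec_dist_le hp.2) hwW) hdc)⟩
    have hiW : i ∉ W \ A := fun h => absurd h.1 (not_le.2 hdc)
    calc (W \ A).ncard + 1 = (insert i (W \ A)).ncard :=
          (Set.ncard_insert_of_notMem hiW (Set.toFinite _)).symm
      _ ≤ K j := le_trans (Set.ncard_le_ncard hsub (Set.toFinite _))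
          (serv_ncard_le x y K s j)
  have hc2 : A.ncard + I.ncard ≤ K j' := by
    have hdisj : Disjoint A I := by
      rw [Set.disjoint_left]
      intro a ha haI
      have heq := hbd a ha.1 ha.2
      have hlt : |x a - y j'| < r j' := haI
      linarith
    have hsub : A ∪ I ⊆ {w | s w = j' ∧ (Pset x y s j' w).ncard < K j'} := by
      intro w hw
      rcases hw with hwA | hwI
      · exact ⟨hwA.2, (key_a w hwA.1 hwA.2).1⟩
      · obtain ⟨h1, h2, _⟩ := inside_served hx hy01 hr1 hrW hrmin hsum hNE w j' hwI
        exact ⟨h1, h2⟩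
    calc A.ncard + I.ncard = (A ∪ I).ncard :=
          (Set.ncard_union_eq hdisj (Set.toFinite _) (Set.toFinite _)).symm
      _ ≤ K j' := le_trans (Set.ncard_le_ncard hsub (Set.toFinite _))
          (serv_ncard_le x y K s j')
  have hWI : Disjoint W I := by
    rw [Set.disjoint_left]
    intro w hwW hwI
    have htrw := htri (x := x) (y := y) w hjj'
    rw [hW] at hwW
    rw [hI] at hwI
    simp only [Set.mem_setOf_eq] at hwW hwI
    linarith
  have hc3 : K 0 + K 1 ≤ W.ncard + I.ncard := by
    have := hcount hgap_eq j j' hjj'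
    rwa [Set.ncard_union_eq hWI (Set.toFinite _) (Set.toFinite _)] at this
  have hc4 : (W \ A).ncard + A.ncard = W.ncard :=
    Set.ncard_diff_add_ncard_of_subset hAW (Set.toFinite _)
  have hc5 : K j + K j' = K 0 + K 1 := fin2_sum K j j' hjj'
  omega

/-- Served agents within the ball of their chosen facility. -/
def Svd (x : Fin n → ℝ) (y : Fin 2 → ℝ) (K : Fin 2 → ℕ) (r : Fin 2 → ℝ)
    (s : Fin n → Fin 2) (j : Fin 2) : Set (Fin n) :=
  {w | s w = j ∧ |x w - y j| ≤ r j ∧ (Pset x y s j w).ncard < K j}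

lemma svd_ncard_le (x : Fin n → ℝ) (y : Fin 2 → ℝ) (K : Fin 2 → ℕ) (r : Fin 2 → ℝ)
    (s : Fin n → Fin 2) (j : Fin 2) : (Svd x y K r s j).ncard ≤ K j := by
  refine le_trans (Set.ncard_le_ncard ?_ (Set.toFinite _)) (serv_ncard_le x y K s j)
  intro w hw
  exact ⟨hw.1, hw.2.2⟩

/-- Saturation: in a NE, facility `j` serves exactly `K j` agents of its ball
(provided `r j < 1`). -/
lemma saturation
    (hx : InUnit x) (hy01 : ∀ j, y j ∈ Set.Icc (0:ℝ) 1)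
    {r : Fin 2 → ℝ}
    (hr1 : ∀ j, r j ≤ 1)
    (hrW : ∀ j, K j ≤ {i | |x i - y j| ≤ r j}.ncard)
    (hrmin : ∀ j (ρ : ℝ), 0 ≤ ρ → ρ < r j → {i | |x i - y j| ≤ ρ}.ncard < K j)
    (hsum : r 0 + r 1 ≤ y 1 - y 0)
    (hcount : r 0 + r 1 = y 1 - y 0 → ∀ j j' : Fin 2, j ≠ j' →
      K 0 + K 1 ≤ ({a | |x a - y j| ≤ r j} ∪ {a | |x a - y j'| < r j'}).ncard)
    (hNE : isNE x y K s) (j : Fin 2) (hrj1 : r j < 1) :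
    K j ≤ (Svd x y K r s j).ncard := by
  by_cases hcase : ∃ w₀, s w₀ = j ∧ |x w₀ - y j| ≤ r j ∧ K j ≤ (Pset x y s j w₀).ncard
  · -- an unserved agent exists in the ball: the K j closest preceders are served
    obtain ⟨w₀, hsw₀, hdw₀, hKw₀⟩ := hcase
    set T : Set (Fin n) := Pset x y s j w₀ with hT
    have hTfin : T.Finite := Set.toFinite _
    set Tf : Finset (Fin n) := hTfin.toFinset with hTf
    have hTcard : T.ncard = Tf.card := Set.ncard_eq_toFinset_card T hTfin
    set emb : Fin n ↪ ℝ ×ₗ Fin n := ⟨key x (y j), key_inj x (y j)⟩ with hemb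
    set G : Finset (ℝ ×ₗ Fin n) := Tf.map emb with hG
    have hGcard : G.card = Tf.card := Finset.card_map _
    obtain ⟨G', hG'sub, hG'card, hbot⟩ := exists_bottom G (K j) (by omega)
    set T' : Finset (Fin n) := Tf.filter (fun p => key x (y j) p ∈ G') with hT'
    have hT'img : T'.map emb = G' := by
      ext b
      constructor
      · intro hb
        obtain ⟨p, hp, rfl⟩ := Finset.mem_map.1 hb
        exact (Finset.mem_filter.1 hp).2
      · intro hb
        obtain ⟨p, hp, rfl⟩ := Finset.mem_map.1 (hG'sub hb)
        exact Finset.mem_map.2 ⟨p, Finset.mem_filter.2 ⟨hp, hb⟩, rfl⟩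
    have hT'card : T'.card = K j := by
      rw [← hG'card, ← hT'img, Finset.card_map]
    have hT'sub : ↑T' ⊆ Svd x y K r s j := by
      intro t' ht'
      have ht'f := Finset.mem_filter.1 ht'
      have ht'T : t' ∈ T := hTfin.mem_toFinset.1 ht'f.1
      have ht'G' : key x (y j) t' ∈ G' := ht'f.2
      obtain ⟨hst', hprec⟩ := ht'T
      have hkey_t'w₀ : key x (y j) t' < key x (y j) w₀ := (prec_iff_key _ _ _ _).1 hprec
      refine ⟨hst', le_trans (prec_dist_le hprec) hdw₀, ?_⟩
      have hsubP : Pset x y s j t' ⊆ ↑(T'.erase t') := by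
        intro p hp
        have hkp : key x (y j) p < key x (y j) t' := (prec_iff_key _ _ _ _).1 hp.2
        have hpT : p ∈ T := ⟨hp.1, (prec_iff_key _ _ _ _).2 (lt_trans hkp hkey_t'w₀)⟩
        have hpTf : p ∈ Tf := hTfin.mem_toFinset.2 hpT
        have hpG : key x (y j) p ∈ G := Finset.mem_map_of_mem _ hpTf
        have hpG' : key x (y j) p ∈ G' := by
          by_contra hn
          exact absurd (hbot _ ht'G' _ hpG hn) (not_lt.2 (le_of_lt hkp))
        have hpT' : p ∈ T' := Finset.mem_filter.2 ⟨hpTf, hpG'⟩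
        have hpne : p ≠ t' := fun h => absurd hkp (h ▸ lt_irrefl _)
        exact Finset.mem_coe.2 (Finset.mem_erase.2 ⟨hpne, hpT'⟩)
      have : (Pset x y s j t').ncard ≤ (T'.erase t').card := by
        rw [← Set.ncard_coe_finset]
        exact Set.ncard_le_ncard hsubP (Set.toFinite _)
      have hErase : (T'.erase t').card = K j - 1 := by
        rw [Finset.card_erase_of_mem ht', hT'card]
      have hKpos : 0 < K j := hT'card ▸ Finset.card_pos.2 ⟨t', ht'⟩
      omega
    calc K j = T'.card := hT'card.symm
      _ = (↑T' : Set (Fin n)).ncard := (Set.ncard_coe_finset _).symm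
      _ ≤ (Svd x y K r s j).ncard := Set.ncard_le_ncard hT'sub (Set.toFinite _)
  · -- every selector of `j` in the ball is served
    push_neg at hcase
    by_contra hltc
    push_neg at hltc
    set j' := 1 - j with hj'
    have hjj' : j ≠ j' := fin2_other j
    have hpair : r j + r j' = r 0 + r 1 := fin2_sum r j j' hjj'
    have hpairK : K j + K j' = K 0 + K 1 := fin2_sum K j j' hjj'
    set W : Set (Fin n) := {a | |x a - y j| ≤ r j} with hWdef
    set X : Set (Fin n) := {a | |x a - y j| ≤ r j ∧ s a = j'} with hXdef
    set I : Set (Fin n) := {a | |x a - y j'| < r j'} with hIdef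
    have hSvd_eq : Svd x y K r s j = {a | |x a - y j| ≤ r j ∧ s a = j} := by
      ext w
      constructor
      · intro hw; exact ⟨hw.2.1, hw.1⟩
      · intro hw; exact ⟨hw.2, hw.1, hcase w hw.2 hw.1⟩
    have hWpart : W = Svd x y K r s j ∪ X := by
      rw [hSvd_eq]
      ext a
      constructor
      · intro ha
        by_cases hsa : s a = j
        · exact Or.inl ⟨ha, hsa⟩
        · exact Or.inr ⟨ha, fin2_resolve j' j (s a) (Ne.symm hjj') hsa⟩
      · rintro (ha | ha) <;> exact ha.1
    have hdisjSX : Disjoint (Svd x y K r s j) X := by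
      rw [Set.disjoint_left]
      intro a ha haX
      rw [hSvd_eq] at ha
      exact absurd (ha.2.symm.trans haX.2) hjj'
    have hWcard : W.ncard = (Svd x y K r s j).ncard + X.ncard := by
      rw [hWpart]
      exact Set.ncard_union_eq hdisjSX (Set.toFinite _) (Set.toFinite _)
    have hXne : X.Nonempty := by
      by_contra hXe
      rw [Set.not_nonempty_iff_eq_empty] at hXe
      rw [hXe, Set.ncard_empty] at hWcard
      have := hrW j
      rw [← hWdef] at this
      omega
    -- facts about members of X
    have key_ξ : ∀ ξ ∈ X, ξ ∈ Svd x y K r s j' ∧ |x ξ - y j'| = r j' ∧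
        r 0 + r 1 = y 1 - y 0 := by
      intro ξ hξ
      obtain ⟨hξW, hξs⟩ := hξ
      have hPξ : (Pset x y s j ξ).ncard < K j := by
        refine lt_of_le_of_lt (Set.ncard_le_ncard ?_ (Set.toFinite _)) hltc
        intro p hp
        rw [hSvd_eq]
        exact ⟨le_trans (prec_dist_le hp.2) hξW, hp.1⟩
      have hdev : 1 - |x ξ - y j| ≤ utility x y K s ξ := ne_dev hNE ξ j hPξ
      have hup : 0 < utility x y K s ξ := lt_of_lt_of_le (by linarith) hdev
      obtain ⟨hPs', hueq⟩ := util_pos ξ hup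
      rw [hξs] at hPs' hueq
      have hple := pos_dist_le hx hy01 hr1 hrW hrmin hsum hcount hNE ξ hup
      rw [hξs] at hple
      have htrξ := htri (x := x) (y := y) ξ hjj'
      have hd2 : |x ξ - y j'| ≤ |x ξ - y j| := by rw [hueq] at hdev; linarith
      refine ⟨⟨hξs, hple, hPs'⟩, by linarith, by linarith⟩
    obtain ⟨ξ₀, hξ₀⟩ := hXne
    have hgap_eq : r 0 + r 1 = y 1 - y 0 := (key_ξ ξ₀ hξ₀).2.2
    have hdisjXI : Disjoint X I := by
      rw [Set.disjoint_left]
      intro a ha haI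
      have heq := (key_ξ a ha).2.1
      have hlt : |x a - y j'| < r j' := haI
      linarith
    have hc2 : X.ncard + I.ncard ≤ K j' := by
      have hsub : X ∪ I ⊆ Svd x y K r s j' := by
        intro w hw
        rcases hw with hwX | hwI
        · exact (key_ξ w hwX).1
        · obtain ⟨h1, h2, _⟩ := inside_served hx hy01 hr1 hrW hrmin hsum hNE w j' hwI
          exact ⟨h1, le_of_lt hwI, h2⟩
      calc X.ncard + I.ncard = (X ∪ I).ncard :=
            (Set.ncard_union_eq hdisjXI (Set.toFinite _) (Set.toFinite _)).symm
        _ ≤ K j' := le_trans (Set.ncard_le_ncard hsub (Set.toFinite _))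
            (svd_ncard_le x y K r s j')
    have hWI : Disjoint W I := by
      rw [Set.disjoint_left]
      intro w hwW hwI
      have htrw := htri (x := x) (y := y) w hjj'
      have h1 : |x w - y j| ≤ r j := hwW
      have h2 : |x w - y j'| < r j' := hwI
      linarith
    have hc3 : K 0 + K 1 ≤ W.ncard + I.ncard := by
      have := hcount hgap_eq j j' hjj'
      rwa [Set.ncard_union_eq hWI (Set.toFinite _) (Set.toFinite _)] at this
    omega

lemma ball_disj {r : Fin 2 → ℝ} (hsum : r 0 + r 1 ≤ y 1 - y 0)
    {j j' : Fin 2} (hjj : j ≠ j') {w : Fin n}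
    (h1 : |x w - y j| ≤ r j) (h2 : |x w - y j'| < r j') : False := by
  have htrw := htri (x := x) (y := y) w hjj
  have hpair : r j + r j' = r 0 + r 1 := fin2_sum r j j' hjj
  linarith

lemma fin2_cases : ∀ z : Fin 2, z = 0 ∨ z = 1 := by decide

/-- Pointwise decomposition of the utility in a NE. -/
lemma util_decomp
    (hx : InUnit x) (hy01 : ∀ j, y j ∈ Set.Icc (0:ℝ) 1)
    {r : Fin 2 → ℝ}
    (hr1 : ∀ j, r j ≤ 1)
    (hrW : ∀ j, K j ≤ {i | |x i - y j| ≤ r j}.ncard)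
    (hrmin : ∀ j (ρ : ℝ), 0 ≤ ρ → ρ < r j → {i | |x i - y j| ≤ ρ}.ncard < K j)
    (hsum : r 0 + r 1 ≤ y 1 - y 0)
    (hcount : r 0 + r 1 = y 1 - y 0 → ∀ j j' : Fin 2, j ≠ j' →
      K 0 + K 1 ≤ ({a | |x a - y j| ≤ r j} ∪ {a | |x a - y j'| < r j'}).ncard)
    (hNE : isNE x y K s) (i : Fin n) :
    utility x y K s i
      = (if |x i - y 0| < r 0 then 1 - |x i - y 0| else 0)
      + (if |x i - y 1| < r 1 then 1 - |x i - y 1| else 0)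
      + (if |x i - y 0| = r 0 ∨ |x i - y 1| = r 1 then utility x y K s i else 0) := by
  by_cases h0 : |x i - y 0| < r 0
  · have h1 : ¬ |x i - y 1| < r 1 := fun h =>
      ball_disj hsum (show (0:Fin 2) ≠ 1 by decide) (le_of_lt h0) h
    have hbd : ¬ (|x i - y 0| = r 0 ∨ |x i - y 1| = r 1) := by
      rintro (h | h)
      · exact absurd h (ne_of_lt h0)
      · exact ball_disj hsum (show (1:Fin 2) ≠ 0 by decide) (le_of_eq h) h0
    rw [if_pos h0, if_neg h1, if_neg hbd,
      (inside_served hx hy01 hr1 hrW hrmin hsum hNE i 0 h0).2.2]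
    ring
  by_cases h1 : |x i - y 1| < r 1
  · have hbd : ¬ (|x i - y 0| = r 0 ∨ |x i - y 1| = r 1) := by
      rintro (h | h)
      · exact ball_disj hsum (show (0:Fin 2) ≠ 1 by decide) (le_of_eq h) h1
      · exact absurd h (ne_of_lt h1)
    rw [if_pos h1, if_neg h0, if_neg hbd,
      (inside_served hx hy01 hr1 hrW hrmin hsum hNE i 1 h1).2.2]
    ring
  rw [if_neg h0, if_neg h1]
  by_cases hbd : |x i - y 0| = r 0 ∨ |x i - y 1| = r 1
  · rw [if_pos hbd]; ring
  · rw [if_neg hbd]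
    push_neg at hbd
    have hu0 : utility x y K s i = 0 := by
      by_contra hne
      have hpos : 0 < utility x y K s i :=
        lt_of_le_of_ne (util_nonneg hx hy01 i) (Ne.symm hne)
      have hle := pos_dist_le hx hy01 hr1 hrW hrmin hsum hcount hNE i hpos
      rcases fin2_cases (s i) with hsi | hsi <;> rw [hsi] at hle
      · exact absurd (lt_of_le_of_ne hle hbd.1) (not_lt.2 (not_lt.1 h0))
      · exact absurd (lt_of_le_of_ne hle hbd.2) (not_lt.2 (not_lt.1 h1))
    rw [hu0]; ring

lemma sum_indicator_const (S : Set (Fin n)) [DecidablePred (· ∈ S)] (c : ℝ) :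
    (∑ i, if i ∈ S then c else 0) = (S.ncard : ℝ) * c := by
  rw [← Finset.sum_filter, Finset.sum_const]
  have hcard : (Finset.univ.filter (fun i => i ∈ S)).card = S.ncard := by
    rw [Set.ncard_eq_toFinset_card']
    congr 1
    ext i
    simp
  rw [hcard, nsmul_eq_mul]

/-- The total utility of boundary agents in a NE. -/
lemma boundary_sum
    (hx : InUnit x) (hy01 : ∀ j, y j ∈ Set.Icc (0:ℝ) 1)
    {r : Fin 2 → ℝ}
    (hrpos : ∀ j, 0 ≤ r j)
    (hr1 : ∀ j, r j ≤ 1)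
    (hrW : ∀ j, K j ≤ {i | |x i - y j| ≤ r j}.ncard)
    (hrmin : ∀ j (ρ : ℝ), 0 ≤ ρ → ρ < r j → {i | |x i - y j| ≤ ρ}.ncard < K j)
    (hsum : r 0 + r 1 ≤ y 1 - y 0)
    (hcount : r 0 + r 1 = y 1 - y 0 → ∀ j j' : Fin 2, j ≠ j' →
      K 0 + K 1 ≤ ({a | |x a - y j| ≤ r j} ∪ {a | |x a - y j'| < r j'}).ncard)
    (hNE : isNE x y K s) :
    (∑ i : Fin n, if |x i - y 0| = r 0 ∨ |x i - y 1| = r 1 then utility x y K s i else 0)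
      = (if r 0 < 1 then ((K 0 : ℝ) - ({a | |x a - y 0| < r 0}.ncard : ℝ)) * (1 - r 0) else 0)
      + (if r 1 < 1 then ((K 1 : ℝ) - ({a | |x a - y 1| < r 1}.ncard : ℝ)) * (1 - r 1) else 0) := by
  set B : Fin 2 → Set (Fin n) :=
    fun j => Svd x y K r s j \ {a | |x a - y j| < r j} with hB
  -- pointwise decomposition over the two boundary pieces
  have hpt : ∀ i, (if |x i - y 0| = r 0 ∨ |x i - y 1| = r 1 then utility x y K s i else 0)
      = (if i ∈ B 0 then 1 - r 0 else 0) + (if i ∈ B 1 then 1 - r 1 else 0) := by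
    intro i
    have hBmem : ∀ j, i ∈ B j → utility x y K s i = 1 - r j ∧ |x i - y j| = r j := by
      intro j hij
      obtain ⟨⟨hsij, hdij, hserv⟩, hnin⟩ := hij
      have heq : |x i - y j| = r j := le_antisymm hdij (not_lt.1 hnin)
      refine ⟨?_, heq⟩
      rw [utility_eq x y K s i hsij, if_pos hserv, heq]
    by_cases hb0 : i ∈ B 0
    · obtain ⟨hu, heq⟩ := hBmem 0 hb0
      have hb1 : i ∉ B 1 := by
        intro hb1
        exact absurd (hb0.1.1.symm.trans hb1.1.1) (by decide)
      rw [if_pos (Or.inl heq), if_pos hb0, if_neg hb1, hu]; ring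
    by_cases hb1 : i ∈ B 1
    · obtain ⟨hu, heq⟩ := hBmem 1 hb1
      rw [if_pos (Or.inr heq), if_neg hb0, if_pos hb1, hu]; ring
    rw [if_neg hb0, if_neg hb1]
    by_cases hbd : |x i - y 0| = r 0 ∨ |x i - y 1| = r 1
    · rw [if_pos hbd]
      -- show the utility is 0
      by_contra hne
      rw [add_zero] at hne
      have hne' : utility x y K s i ≠ 0 := hne
      have hpos : 0 < utility x y K s i :=
        lt_of_le_of_ne (util_nonneg hx hy01 i) (Ne.symm hne')
      have hle := pos_dist_le hx hy01 hr1 hrW hrmin hsum hcount hNE i hpos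
      obtain ⟨hserv, _⟩ := util_pos i hpos
      rcases lt_or_eq_of_le hle with hlt | heq
      · -- strictly inside: contradicts the boundary membership
        rcases hbd with h | h
        · rcases fin2_cases (s i) with hsi | hsi <;> rw [hsi] at hlt
          · exact absurd h (ne_of_lt hlt)
          · exact ball_disj hsum (show (0:Fin 2) ≠ 1 by decide) (le_of_eq h) hlt
        · rcases fin2_cases (s i) with hsi | hsi <;> rw [hsi] at hlt
          · exact ball_disj hsum (show (1:Fin 2) ≠ 0 by decide) (le_of_eq h) hlt
          · exact absurd h (ne_of_lt hlt)
      · -- exactly on the boundary of its own facility : i ∈ B (s i)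
        have hiB : i ∈ B (s i) := by
          refine ⟨⟨rfl, hle, hserv⟩, ?_⟩
          intro hmem
          have hlt : |x i - y (s i)| < r (s i) := hmem
          exact absurd heq (ne_of_lt hlt)
        rcases fin2_cases (s i) with hsi | hsi <;> rw [hsi] at hiB
        · exact hb0 hiB
        · exact hb1 hiB
    · rw [if_neg hbd]; ring
  rw [Finset.sum_congr rfl (fun i _ => hpt i), Finset.sum_add_distrib]
  rw [sum_indicator_const (B 0) (1 - r 0), sum_indicator_const (B 1) (1 - r 1)]
  -- compute the cardinalities
  have hBcard : ∀ j : Fin 2, r j < 1 →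
      ((B j).ncard : ℝ) = (K j : ℝ) - ({a | |x a - y j| < r j}.ncard : ℝ) := by
    intro j hrj1
    have hIsub : {a | |x a - y j| < r j} ⊆ Svd x y K r s j := by
      intro w hw
      obtain ⟨h1, h2, h3⟩ := inside_served hx hy01 hr1 hrW hrmin hsum hNE w j hw
      exact ⟨h1, le_of_lt hw, h2⟩
    have hSvdcard : (Svd x y K r s j).ncard = K j :=
      le_antisymm (svd_ncard_le x y K r s j)
        (saturation hx hy01 hr1 hrW hrmin hsum hcount hNE j hrj1)
    have hdiff : (B j).ncard = K j - {a | |x a - y j| < r j}.ncard := by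
      rw [hB]
      rw [Set.ncard_diff hIsub (Set.toFinite _), hSvdcard]
    have hle : {a | |x a - y j| < r j}.ncard ≤ K j := by
      rw [← hSvdcard]
      exact Set.ncard_le_ncard hIsub (Set.toFinite _)
    rw [hdiff]
    push_cast [Nat.cast_sub hle]
    ring
  have hterm : ∀ j : Fin 2, ((B j).ncard : ℝ) * (1 - r j)
      = (if r j < 1 then ((K j : ℝ) - ({a | |x a - y j| < r j}.ncard : ℝ)) * (1 - r j)
          else 0) := by
    intro j
    by_cases hrj1 : r j < 1
    · rw [if_pos hrj1, hBcard j hrj1]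
    · rw [if_neg hrj1]
      have : r j = 1 := le_antisymm (hr1 j) (not_lt.1 hrj1)
      rw [this]
      ring
  rw [hterm 0, hterm 1]

lemma fin2_pair : ∀ j j' : Fin 2, j ≠ j' →
    (j = 0 ∧ j' = 1) ∨ (j = 1 ∧ j' = 0) := by decide

end Core

end ESWG

/-- Structure of the Nash equilibria induced by an Equilibrium Stable
Wide-Gap percentile mechanism for two facilities: with `y = PM_v(x)`, `y₁ < y₂`, and
`r j` the minimal radius whose closed ball around `y j` contains at least `k j` agents,
one has `r₁ + r₂ ≤ |y₁ - y₂|`; in every pure NE, agents strictly inside a ball are served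
by the corresponding facility, agents strictly outside both balls get utility `0`, the
total utility of the boundary agents is the same across all pure NE, and hence all pure
NE yield the same Social Welfare. -/
theorem ES_WG_NE_structure (n k₁ k₂ : ℕ) (hk : k₂ ≤ k₁) (hk₂ : 0 < k₂)
    (hn : k₁ + k₂ < n)
    (v : Fin 2 → ℝ) (hv : ∀ j, v j ∈ Set.Icc (0 : ℝ) 1) (hlt : v 0 < v 1)
    (hgap : (k₁ : ℤ) + k₂ - 1 ≤ ⌊((n : ℝ) - 1) * v 1⌋ - ⌊((n : ℝ) - 1) * v 0⌋)
    (x : Fin n → ℝ) (hx : InUnit x)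
    (y : Fin 2 → ℝ) (hy : y = PM v x) (hylt : y 0 < y 1)
    (r : Fin 2 → ℝ)
    (hr : ∀ j, r j = sInf {ρ : ℝ | 0 ≤ ρ ∧ ![k₁, k₂] j ≤ {i | |x i - y j| ≤ ρ}.ncard}) :
    r 0 + r 1 ≤ |y 0 - y 1| ∧
    (∀ s, isNE x y ![k₁, k₂] s → ∀ (i : Fin n) (j : Fin 2), |x i - y j| < r j →
      utility x y ![k₁, k₂] s i = 1 - |x i - y j|) ∧
    (∀ s, isNE x y ![k₁, k₂] s → ∀ i : Fin n,
      r 0 < |x i - y 0| → r 1 < |x i - y 1| → utility x y ![k₁, k₂] s i = 0) ∧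
    (∀ s s', isNE x y ![k₁, k₂] s → isNE x y ![k₁, k₂] s' →
      (∑ i : Fin n, if |x i - y 0| = r 0 ∨ |x i - y 1| = r 1 then
          utility x y ![k₁, k₂] s i else 0) =
      (∑ i : Fin n, if |x i - y 0| = r 0 ∨ |x i - y 1| = r 1 then
          utility x y ![k₁, k₂] s' i else 0)) ∧
    (∀ s s', isNE x y ![k₁, k₂] s → isNE x y ![k₁, k₂] s' →
      SW x y ![k₁, k₂] s = SW x y ![k₁, k₂] s') := by
  have hn0 : 0 < n := by omega
  have hKval : ∀ j : Fin 2, 1 ≤ ![k₁, k₂] j ∧ ![k₁, k₂] j ≤ k₁ := by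
    intro j
    rcases ESWG.fin2_cases j with rfl | rfl <;>
      simp [Matrix.cons_val_zero, Matrix.cons_val_one, Matrix.head_cons] <;> omega
  -- location of the facilities in the sorted order
  set ia : ℕ := (⌊((n : ℝ) - 1) * v 0⌋).toNat with hia
  set ib : ℕ := (⌊((n : ℝ) - 1) * v 1⌋).toNat with hib
  have hn1R : (0:ℝ) ≤ (n:ℝ) - 1 := by
    have : (1:ℝ) ≤ (n:ℝ) := by exact_mod_cast hn0
    linarith
  have hfl0 : (0:ℤ) ≤ ⌊((n : ℝ) - 1) * v 0⌋ :=
    Int.floor_nonneg.2 (mul_nonneg hn1R (hv 0).1)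
  have hfl1 : (0:ℤ) ≤ ⌊((n : ℝ) - 1) * v 1⌋ :=
    Int.floor_nonneg.2 (mul_nonneg hn1R (hv 1).1)
  have hfl1le : ⌊((n : ℝ) - 1) * v 1⌋ ≤ (n:ℤ) - 1 := by
    have h1 : ((n : ℝ) - 1) * v 1 ≤ (n:ℝ) - 1 := by
      have := (hv 1).2
      nlinarith [hn1R]
    have h2 : (⌊((n : ℝ) - 1) * v 1⌋ : ℝ) ≤ (n:ℝ) - 1 :=
      le_trans (Int.floor_le _) h1
    exact_mod_cast (by push_cast; linarith : (⌊((n : ℝ) - 1) * v 1⌋ : ℝ) ≤ ((n:ℤ) - 1 : ℤ))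
  have hib_le : ib ≤ n - 1 := by omega
  have hibn : ib < n := by omega
  have hab : ia + (k₁ + k₂ - 1) ≤ ib := by omega
  have hian : ia < n := by omega
  have hc1n : ia + k₁ - 1 < n := by omega
  have hc2n : ia + k₁ < n := by omega
  have hmono := Tuple.monotone_sort x
  have hy0 : y 0 = x (Tuple.sort x ⟨ia, hian⟩) := by
    rw [hy]
    show sortedVal x ia = _
    unfold sortedVal
    rw [dif_pos hian]
  have hy1 : y 1 = x (Tuple.sort x ⟨ib, hibn⟩) := by
    rw [hy]
    show sortedVal x ib = _
    unfold sortedVal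
    rw [dif_pos hibn]
  have hy01 : ∀ j, y j ∈ Set.Icc (0:ℝ) 1 := by
    intro j
    rcases ESWG.fin2_cases j with rfl | rfl
    · rw [hy0]; exact hx _
    · rw [hy1]; exact hx _
  have hxabs : ∀ (i : Fin n) (j : Fin 2), |x i - y j| ≤ 1 :=
    ESWG.habs_le hx hy01
  -- basic properties of the radii
  have hSmem1 : ∀ j : Fin 2,
      (1:ℝ) ∈ {ρ : ℝ | 0 ≤ ρ ∧ ![k₁, k₂] j ≤ {i | |x i - y j| ≤ ρ}.ncard} := by
    intro j
    refine ⟨zero_le_one, ?_⟩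
    have huniv : {i : Fin n | |x i - y j| ≤ 1} = Set.univ := by
      ext i; simpa using hxabs i j
    rw [huniv, Set.ncard_univ, Nat.card_eq_fintype_card, Fintype.card_fin]
    have := hKval j
    omega
  have hSbdd : ∀ j : Fin 2,
      BddBelow {ρ : ℝ | 0 ≤ ρ ∧ ![k₁, k₂] j ≤ {i | |x i - y j| ≤ ρ}.ncard} :=
    fun j => ⟨0, fun ρ hρ => hρ.1⟩
  have hr_le : ∀ (j : Fin 2) (ρ : ℝ),
      ρ ∈ {ρ : ℝ | 0 ≤ ρ ∧ ![k₁, k₂] j ≤ {i | |x i - y j| ≤ ρ}.ncard} → r j ≤ ρ := by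
    intro j ρ hρ
    rw [hr j]
    exact csInf_le (hSbdd j) hρ
  have hrpos : ∀ j : Fin 2, 0 ≤ r j := by
    intro j
    rw [hr j]
    exact le_csInf ⟨1, hSmem1 j⟩ (fun ρ hρ => hρ.1)
  have hr1v : ∀ j : Fin 2, r j ≤ 1 := fun j => hr_le j 1 (hSmem1 j)
  have hrminv : ∀ (j : Fin 2) (ρ : ℝ), 0 ≤ ρ → ρ < r j →
      {i | |x i - y j| ≤ ρ}.ncard < ![k₁, k₂] j := by
    intro j ρ h0 hρ
    by_contra hge
    push_neg at hge
    exact absurd (hr_le j ρ ⟨h0, hge⟩) (not_le.2 hρ)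
  have hrWv : ∀ j : Fin 2, ![k₁, k₂] j ≤ {i | |x i - y j| ≤ r j}.ncard := by
    intro j
    set f : Fin n → ℝ := fun i => |x i - y j| with hf
    have hKn : ![k₁, k₂] j - 1 < n := by have := hKval j; omega
    set m : Fin n := ⟨![k₁, k₂] j - 1, hKn⟩ with hm
    have hmval : (m : ℕ) = ![k₁, k₂] j - 1 := rfl
    set ρ₀ : ℝ := f (Tuple.sort f m) with hρ₀
    have h1 : (m : ℕ) < {i | f i ≤ ρ₀}.ncard :=
      (ESWG.lt_ncard_iff_sorted_le f ρ₀ m).2 (le_refl _)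
    have h2 : ρ₀ ≤ r j := by
      rw [hr j]
      refine le_csInf ⟨1, hSmem1 j⟩ ?_
      intro ρ hρ
      refine (ESWG.lt_ncard_iff_sorted_le f ρ m).1 ?_
      have h4 := hρ.2
      have h5 : {i | |x i - y j| ≤ ρ}.ncard = {i | f i ≤ ρ}.ncard := rfl
      have := hKval j
      omega
    have h3 : (m : ℕ) < {i | f i ≤ r j}.ncard :=
      (ESWG.lt_ncard_iff_sorted_le f (r j) m).2 h2
    have h6 : {i | |x i - y j| ≤ r j}.ncard = {i | f i ≤ r j}.ncard := rfl
    have := hKval j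
    omega
  -- counting agents via sorted indices
  have hIccCount : ∀ (lo hi : ℕ) (hhi : hi < n) (S : Set (Fin n)),
      (∀ t (h1 : lo ≤ t) (h2 : t ≤ hi),
        Tuple.sort x ⟨t, lt_of_le_of_lt h2 hhi⟩ ∈ S) →
      hi + 1 - lo ≤ S.ncard := by
    intro lo hi hhi S hmem
    have hcard := ESWG.card_le_ncard_of_inj (T := Finset.Icc lo hi)
      (f := fun t => if h : t < n then Tuple.sort x ⟨t, h⟩ else Tuple.sort x ⟨0, hn0⟩)
      (S := S) ?_ ?_
    · rwa [Nat.card_Icc] at hcard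
    · intro t ht
      rw [Finset.mem_Icc] at ht
      have hb : t < n := lt_of_le_of_lt ht.2 hhi
      show (if h : t < n then (Tuple.sort x) ⟨t, h⟩ else (Tuple.sort x) ⟨0, hn0⟩) ∈ S
      rw [dif_pos hb]
      exact hmem t ht.1 ht.2
    · intro t ht t' ht' heq
      rw [Finset.coe_Icc, Set.mem_Icc] at ht ht'
      have hb : t < n := lt_of_le_of_lt ht.2 hhi
      have hb' : t' < n := lt_of_le_of_lt ht'.2 hhi
      simp only [dif_pos hb, dif_pos hb'] at heq
      have := (Tuple.sort x).injective heq
      simpa using congrArg Fin.val this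
  -- the gap bound  r 0 + r 1 ≤ y 1 - y 0
  have hsumv : r 0 + r 1 ≤ y 1 - y 0 := by
    set c : ℝ := x (Tuple.sort x ⟨ia + k₁ - 1, hc1n⟩) with hc
    set c' : ℝ := x (Tuple.sort x ⟨ia + k₁, hc2n⟩) with hc'
    have hcc' : c ≤ c' := hmono (by simp only [Fin.mk_le_mk]; omega)
    have hy0c : y 0 ≤ c := by
      rw [hy0]
      exact hmono (by simp only [Fin.mk_le_mk]; omega)
    have hc'y1 : c' ≤ y 1 := by
      rw [hy1]
      exact hmono (by simp only [Fin.mk_le_mk]; omega)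
    have hr0le : r 0 ≤ c - y 0 := by
      refine hr_le 0 _ ⟨by linarith, ?_⟩
      have hcnt := hIccCount ia (ia + k₁ - 1) hc1n {i | |x i - y 0| ≤ c - y 0} ?_
      · have : ![k₁, k₂] 0 = k₁ := rfl
        omega
      · intro t h1 h2
        have hle1 : y 0 ≤ x (Tuple.sort x ⟨t, lt_of_le_of_lt h2 hc1n⟩) := by
          rw [hy0]; exact hmono (by simp only [Fin.mk_le_mk]; omega)
        have hle2 : x (Tuple.sort x ⟨t, lt_of_le_of_lt h2 hc1n⟩) ≤ c := by
          rw [hc]; exact hmono (by simp only [Fin.mk_le_mk]; omega)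
        show |x (Tuple.sort x ⟨t, lt_of_le_of_lt h2 hc1n⟩) - y 0| ≤ c - y 0
        rw [abs_of_nonneg (by linarith)]
        linarith
    have hr1le : r 1 ≤ y 1 - c' := by
      refine hr_le 1 _ ⟨by linarith, ?_⟩
      have hcnt := hIccCount (ia + k₁) ib hibn {i | |x i - y 1| ≤ y 1 - c'} ?_
      · have : ![k₁, k₂] 1 = k₂ := rfl
        omega
      · intro t h1 h2
        have hle1 : c' ≤ x (Tuple.sort x ⟨t, lt_of_le_of_lt h2 hibn⟩) := by
          rw [hc']; exact hmono (by simp only [Fin.mk_le_mk]; omega)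
        have hle2 : x (Tuple.sort x ⟨t, lt_of_le_of_lt h2 hibn⟩) ≤ y 1 := by
          rw [hy1]; exact hmono (by simp only [Fin.mk_le_mk]; omega)
        show |x (Tuple.sort x ⟨t, lt_of_le_of_lt h2 hibn⟩) - y 1| ≤ y 1 - c'
        rw [abs_of_nonpos (by linarith)]
        linarith
    linarith
  -- the wide-gap counting fact
  have hcountv : r 0 + r 1 = y 1 - y 0 → ∀ j j' : Fin 2, j ≠ j' →
      ![k₁, k₂] 0 + ![k₁, k₂] 1 ≤
        ({a | |x a - y j| ≤ r j} ∪ {a | |x a - y j'| < r j'}).ncard := by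
    intro hgq j j' hjj
    have hbet : k₁ + k₂ ≤ {i | y 0 ≤ x i ∧ x i ≤ y 1}.ncard := by
      have hcnt := hIccCount ia ib hibn {i | y 0 ≤ x i ∧ x i ≤ y 1} ?_
      · omega
      · intro t h1 h2
        constructor
        · rw [hy0]; exact hmono (by simp only [Fin.mk_le_mk]; omega)
        · rw [hy1]; exact hmono (by simp only [Fin.mk_le_mk]; omega)
    have hKsum : ![k₁, k₂] 0 + ![k₁, k₂] 1 = k₁ + k₂ := rfl
    rw [hKsum]
    refine le_trans hbet (Set.ncard_le_ncard ?_ (Set.toFinite _))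
    intro z hz
    obtain ⟨hz1, hz2⟩ := hz
    have e0 : |x z - y 0| = x z - y 0 := abs_of_nonneg (by linarith)
    have e1 : |x z - y 1| = y 1 - x z := by
      rw [abs_of_nonpos (by linarith)]; ring
    rcases ESWG.fin2_pair j j' hjj with ⟨rfl, rfl⟩ | ⟨rfl, rfl⟩
    · by_cases hcase : |x z - y 0| ≤ r 0
      · exact Or.inl hcase
      · push_neg at hcase
        rw [e0] at hcase
        refine Or.inr ?_
        show |x z - y 1| < r 1
        rw [e1]; linarith
    · by_cases hcase : |x z - y 1| ≤ r 1
      · exact Or.inl hcase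
      · push_neg at hcase
        rw [e1] at hcase
        refine Or.inr ?_
        show |x z - y 0| < r 0
        rw [e0]; linarith
  -- assemble the five statements
  have conj2 : ∀ s, isNE x y ![k₁, k₂] s → ∀ (i : Fin n) (j : Fin 2),
      |x i - y j| < r j → utility x y ![k₁, k₂] s i = 1 - |x i - y j| := by
    intro s hNE i j hin
    exact (ESWG.inside_served hx hy01 hr1v hrWv hrminv hsumv hNE i j hin).2.2
  have conj4 : ∀ s s', isNE x y ![k₁, k₂] s → isNE x y ![k₁, k₂] s' →
      (∑ i : Fin n, if |x i - y 0| = r 0 ∨ |x i - y 1| = r 1 then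
          utility x y ![k₁, k₂] s i else 0) =
      (∑ i : Fin n, if |x i - y 0| = r 0 ∨ |x i - y 1| = r 1 then
          utility x y ![k₁, k₂] s' i else 0) := by
    intro s s' hNE hNE'
    rw [ESWG.boundary_sum hx hy01 hrpos hr1v hrWv hrminv hsumv hcountv hNE,
      ESWG.boundary_sum hx hy01 hrpos hr1v hrWv hrminv hsumv hcountv hNE']
  refine ⟨?_, conj2, ?_, conj4, ?_⟩
  · rw [abs_sub_comm, abs_of_nonneg (by linarith)]
    exact hsumv
  · intro s hNE i h0 h1
    by_contra hne
    have hpos : 0 < utility x y ![k₁, k₂] s i :=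
      lt_of_le_of_ne (ESWG.util_nonneg hx hy01 i) (Ne.symm hne)
    have hle := ESWG.pos_dist_le hx hy01 hr1v hrWv hrminv hsumv hcountv hNE i hpos
    rcases ESWG.fin2_cases (s i) with hsi | hsi <;> rw [hsi] at hle
    · linarith
    · linarith
  · intro s s' hNE hNE'
    have hS : ∀ s₀, isNE x y ![k₁, k₂] s₀ → SW x y ![k₁, k₂] s₀
        = (∑ i : Fin n, ((if |x i - y 0| < r 0 then 1 - |x i - y 0| else 0)
            + (if |x i - y 1| < r 1 then 1 - |x i - y 1| else 0)))
        + (∑ i : Fin n, if |x i - y 0| = r 0 ∨ |x i - y 1| = r 1 then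
            utility x y ![k₁, k₂] s₀ i else 0) := by
      intro s₀ h₀
      unfold SW
      rw [← Finset.sum_add_distrib]
      refine Finset.sum_congr rfl ?_
      intro i _
      exact ESWG.util_decomp hx hy01 hr1v hrWv hrminv hsumv hcountv h₀ i
    rw [hS s hNE, hS s' hNE', conj4 s s' hNE hNE']
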